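/- Let K = ∏_{i=1}^n [x_i⁰ − h_i, x_i⁰ + h_i] ⊂ ℝⁿ be an axis-parallel box with center x⁰ and half side-lengths h_i > 0. Let u be a real polynomial in n variables of total degree at most 3, let v be a real polynomial of total degree at most 1, and let q be a Wilson interpolant of u on K. Then ∫_K ∇(u − q)·∇v dx = − Σ_{i=1}^n Σ_{j≠i} (h_i²/3) ∫_K (∂³u/∂x_i²∂x_j)·(∂v/∂x_j) dx. -/

import Mathlib

open MvPolynomial MeasureTheory

namespace Wilson51

variable {n : ℕ}

lemma continuous_mveval (p : MvPolynomial (Fin n) ℝ) :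
    Continuous fun x : Fin n → ℝ => eval x p := by
  induction p using MvPolynomial.induction_on with
  | C a => simpa using continuous_const
  | add p q hp hq => simp only [map_add]; exact hp.add hq
  | mul_X p i hp => simp only [map_mul, eval_X]; exact hp.mul (continuous_apply i)

variable (x0 hh : Fin n → ℝ)

def box : Set (Fin n → ℝ) := Set.univ.pi fun j => Set.Icc (x0 j - hh j) (x0 j + hh j)

lemma measurableSet_box : MeasurableSet (box x0 hh) :=
  MeasurableSet.univ_pi fun _ => measurableSet_Icc

lemma integrableOn_eval (p : MvPolynomial (Fin n) ℝ) :
    IntegrableOn (fun x => eval x p) (box x0 hh) :=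
  (continuous_mveval p).continuousOn.integrableOn_compact
    (isCompact_univ_pi fun _ => isCompact_Icc)

lemma setIntegral_prod_eq_prod (f : Fin n → ℝ → ℝ) :
    (∫ x in box x0 hh, ∏ i, f i (x i))
      = ∏ i, ∫ t in Set.Icc (x0 i - hh i) (x0 i + hh i), f i t := by
  rw [← integral_indicator (measurableSet_box x0 hh)]
  have key : ∀ x : Fin n → ℝ, (box x0 hh).indicator (fun x => ∏ i, f i (x i)) x
      = ∏ i, (Set.Icc (x0 i - hh i) (x0 i + hh i)).indicator (f i) (x i) := by
    intro x
    by_cases hx : x ∈ box x0 hh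
    · rw [Set.indicator_of_mem hx]
      exact Finset.prod_congr rfl fun i _ =>
        (Set.indicator_of_mem (hx i (Set.mem_univ i)) _).symm
    · rw [Set.indicator_of_notMem hx]
      rw [box, Set.mem_univ_pi] at hx
      push_neg at hx
      obtain ⟨i, hi⟩ := hx
      exact (Finset.prod_eq_zero (Finset.mem_univ i)
        (Set.indicator_of_notMem hi _)).symm
  simp_rw [key]
  rw [MeasureTheory.volume_pi, MeasureTheory.integral_fintype_prod_eq_prod
    (fun i => (Set.Icc (x0 i - hh i) (x0 i + hh i)).indicator (f i))]
  exact Finset.prod_congr rfl fun i _ => (integral_indicator measurableSet_Icc)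


noncomputable def mom (i : Fin n) (k : ℕ) : ℝ :=
  ((x0 i + hh i) ^ (k + 1) - (x0 i - hh i) ^ (k + 1)) / (k + 1)

lemma integral_pow_Icc {i : Fin n} (hi : 0 < hh i) (k : ℕ) :
    (∫ t in Set.Icc (x0 i - hh i) (x0 i + hh i), t ^ k) = mom x0 hh i k := by
  rw [MeasureTheory.integral_Icc_eq_integral_Ioc,
    ← intervalIntegral.integral_of_le (by linarith), integral_pow, mom]

-- derivative moment identity
lemma mom_deriv (i : Fin n) (k : ℕ) :
    (k : ℝ) * mom x0 hh i (k - 1) = (x0 i + hh i) ^ k - (x0 i - hh i) ^ k := by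
  cases k with
  | zero => simp
  | succ m =>
      have : ((m : ℝ) + 1) ≠ 0 := by positivity
      simp only [Nat.add_sub_cancel, mom]
      push_cast
      field_simp

lemma mom_T {i : Fin n} (hi : 0 < hh i) {k : ℕ} (hk : k ≤ 3) :
    mom x0 hh i k + hh i ^ 2 / 3 * ((k : ℝ) * ((k : ℝ) - 1)) * mom x0 hh i (k - 2)
      = hh i * ((x0 i + hh i) ^ k + (x0 i - hh i) ^ k) := by
  interval_cases k <;> · simp only [mom]; push_cast; ring_nf
 

noncomputable def II (p : MvPolynomial (Fin n) ℝ) : ℝ := ∫ x in box x0 hh, eval x p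

def vtx (ε : Fin n → Bool) : Fin n → ℝ := fun i => if ε i then x0 i + hh i else x0 i - hh i

noncomputable def VV (j : Fin n) (p : MvPolynomial (Fin n) ℝ) : ℝ :=
  ∑ ε : Fin n → Bool, (if ε j then (1 : ℝ) else -1) * eval (vtx x0 hh ε) p

lemma eval_monomial_prod (x : Fin n → ℝ) (d : Fin n →₀ ℕ) (c : ℝ) :
    eval x (monomial d c) = c * ∏ i, x i ^ d i := by
  rw [eval_monomial]
  congr 1
  exact Finsupp.prod_fintype _ _ fun i => pow_zero (x i)

lemma II_monomial (hpos : ∀ i, 0 < hh i) (d : Fin n →₀ ℕ) (c : ℝ) :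
    II x0 hh (monomial d c) = c * ∏ i, mom x0 hh i (d i) := by
  unfold II
  simp_rw [eval_monomial_prod]
  rw [MeasureTheory.integral_const_mul, setIntegral_prod_eq_prod x0 hh fun i t => t ^ d i]
  congr 1
  exact Finset.prod_congr rfl fun i _ => integral_pow_Icc x0 hh (hpos i) (d i)

lemma II_finset_sum {A : Type*} (s : Finset A) (F : A → MvPolynomial (Fin n) ℝ) :
    II x0 hh (∑ a ∈ s, F a) = ∑ a ∈ s, II x0 hh (F a) := by
  unfold II
  simp_rw [map_sum]
  exact integral_finset_sum s fun a _ => integrableOn_eval x0 hh (F a)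

lemma VV_finset_sum {A : Type*} (j : Fin n) (s : Finset A) (F : A → MvPolynomial (Fin n) ℝ) :
    VV x0 hh j (∑ a ∈ s, F a) = ∑ a ∈ s, VV x0 hh j (F a) := by
  unfold VV
  simp_rw [map_sum, Finset.mul_sum]
  exact Finset.sum_comm

lemma VV_monomial (j : Fin n) (d : Fin n →₀ ℕ) (c : ℝ) :
    VV x0 hh j (monomial d c)
      = c * (((x0 j + hh j) ^ d j - (x0 j - hh j) ^ d j)
          * ∏ i ∈ Finset.univ.erase j, ((x0 i + hh i) ^ d i + (x0 i - hh i) ^ d i)) := by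
  classical
  unfold VV
  simp_rw [eval_monomial_prod]
  set f : Fin n → Bool → ℝ := fun i b =>
    (if i = j then (if b then (1:ℝ) else -1) else 1)
      * (if b then x0 i + hh i else x0 i - hh i) ^ d i with hf
  have key : ∀ ε : Fin n → Bool,
      (if ε j then (1 : ℝ) else -1) * (c * ∏ i, vtx x0 hh ε i ^ d i)
        = c * ∏ i, f i (ε i) := by
    intro ε
    have h1 : ∏ i, f i (ε i)
        = ((if ε j then (1:ℝ) else -1) * vtx x0 hh ε j ^ d j)
            * ∏ i ∈ Finset.univ.erase j, vtx x0 hh ε i ^ d i := by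
      rw [← Finset.mul_prod_erase Finset.univ _ (Finset.mem_univ j)]
      simp only [hf, if_pos rfl]
      rw [show ((if ε j then x0 j + hh j else x0 j - hh j)) = vtx x0 hh ε j from rfl]
      congr 1
      refine Finset.prod_congr rfl fun i hi => ?_
      rw [if_neg (Finset.ne_of_mem_erase hi), one_mul]
      rfl
    rw [h1, ← Finset.mul_prod_erase Finset.univ (fun i => vtx x0 hh ε i ^ d i)
      (Finset.mem_univ j)]
    ring
  simp_rw [key]
  rw [← Finset.mul_sum]
  congr 1
  rw [← Fintype.prod_sum f]
  rw [← Finset.mul_prod_erase Finset.univ (fun i => ∑ b : Bool, f i b) (Finset.mem_univ j)]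
  congr 1
  · simp [hf]; ring
  · refine Finset.prod_congr rfl fun i hi => ?_
    simp [hf, if_neg (Finset.ne_of_mem_erase hi)]

lemma prod_add_unique {E : Finset (Fin n)} {m δ : Fin n → ℝ}
    (h : ∀ i ∈ E, ∀ i' ∈ E, δ i ≠ 0 → δ i' ≠ 0 → i = i') :
    ∏ i ∈ E, m i + ∑ i ∈ E, δ i * ∏ k ∈ E.erase i, m k = ∏ i ∈ E, (m i + δ i) := by
  classical
  by_cases hall : ∀ i ∈ E, δ i = 0
  · rw [Finset.sum_eq_zero fun i hi => by rw [hall i hi, zero_mul], add_zero]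
    exact Finset.prod_congr rfl fun i hi => by rw [hall i hi, add_zero]
  · push_neg at hall
    obtain ⟨i0, hi0, hd0⟩ := hall
    have hz : ∀ k ∈ E.erase i0, δ k = 0 := by
      intro k hk
      by_contra hk'
      exact (Finset.ne_of_mem_erase hk) (h k (Finset.mem_of_mem_erase hk) i0 hi0 hk' hd0)
    have h2 : ∑ i ∈ E, δ i * ∏ k ∈ E.erase i, m k = δ i0 * ∏ k ∈ E.erase i0, m k := by
      refine Finset.sum_eq_single i0 (fun i hi hne => ?_) (fun hni => absurd hi0 hni)
      rw [hz i (Finset.mem_erase.2 ⟨hne, hi⟩), zero_mul]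
    have h3 : ∏ k ∈ E.erase i0, (m k + δ k) = ∏ k ∈ E.erase i0, m k :=
      Finset.prod_congr rfl fun k hk => by rw [hz k hk, add_zero]
    rw [h2, ← Finset.mul_prod_erase E (fun i => m i + δ i) hi0, h3,
        ← Finset.mul_prod_erase E m hi0]
    ring

lemma cast_mul_pred (a : ℕ) : ((a : ℝ)) * ((a - 1 : ℕ) : ℝ) = (a : ℝ) * ((a : ℝ) - 1) := by
  cases a with
  | zero => simp
  | succ m => push_cast [Nat.succ_sub_one]; ring

lemma Phi_monomial (hpos : ∀ i, 0 < hh i) (j : Fin n) (d : Fin n →₀ ℕ) (c : ℝ)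
    (hd : (∑ i, d i) ≤ 3 ∨ ∀ i, d i ≤ 1) :
    II x0 hh (pderiv j (monomial d c))
      + ∑ i ∈ Finset.univ.erase j, hh i ^ 2 / 3 *
          II x0 hh (pderiv j (pderiv i (pderiv i (monomial d c))))
      = (∏ i ∈ Finset.univ.erase j, hh i) * VV x0 hh j (monomial d c) := by
  classical
  set E := Finset.univ.erase j with hE
  -- first derivative
  have p1 : ∏ i, mom x0 hh i (((d - Finsupp.single j 1 : Fin n →₀ ℕ) i))
      = mom x0 hh j (d j - 1) * ∏ i ∈ E, mom x0 hh i (d i) := by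
    rw [← Finset.mul_prod_erase Finset.univ _ (Finset.mem_univ j)]
    congr 1
    · rw [Finsupp.tsub_apply, Finsupp.single_eq_same]
    · refine Finset.prod_congr rfl fun i hi => ?_
      rw [Finsupp.tsub_apply, Finsupp.single_eq_of_ne (Finset.ne_of_mem_erase hi),
        tsub_zero]
  have e1 : II x0 hh (pderiv j (monomial d c))
      = c * (d j : ℝ) * (mom x0 hh j (d j - 1) * ∏ i ∈ E, mom x0 hh i (d i)) := by
    rw [pderiv_monomial, II_monomial x0 hh hpos, p1]
  -- triple derivatives
  have e3 : ∀ i ∈ E, II x0 hh (pderiv j (pderiv i (pderiv i (monomial d c))))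
      = c * (d i : ℝ) * ((d i - 1 : ℕ) : ℝ) * (d j : ℝ) *
        (mom x0 hh j (d j - 1) *
          (mom x0 hh i (d i - 2) * ∏ k ∈ E.erase i, mom x0 hh k (d k))) := by
    intro i hi
    have hij : i ≠ j := Finset.ne_of_mem_erase hi
    have hsub1 : ((d - Finsupp.single i 1 : Fin n →₀ ℕ) i) = d i - 1 := by
      rw [Finsupp.tsub_apply, Finsupp.single_eq_same]
    have hsub2 : ((d - Finsupp.single i 1 - Finsupp.single i 1 : Fin n →₀ ℕ) j) = d j := by
      simp [Finsupp.tsub_apply, Finsupp.single_eq_of_ne' hij]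
    have hset : ∀ k : Fin n, ((d - Finsupp.single i 1 - Finsupp.single i 1
        - Finsupp.single j 1 : Fin n →₀ ℕ) k) = d k - (if i = k then 2 else 0) - (if j = k then 1 else 0) := by
      intro k
      simp only [Finsupp.tsub_apply, Finsupp.single_apply]
      split_ifs <;> omega
    have pr : ∏ k, mom x0 hh k (((d - Finsupp.single i 1 - Finsupp.single i 1
        - Finsupp.single j 1 : Fin n →₀ ℕ) k))
        = mom x0 hh j (d j - 1) *
          (mom x0 hh i (d i - 2) * ∏ k ∈ E.erase i, mom x0 hh k (d k)) := by
      rw [← Finset.mul_prod_erase Finset.univ _ (Finset.mem_univ j), ← hE,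
        ← Finset.mul_prod_erase E _ hi]
      congr 1
      · rw [hset j, if_neg hij, if_pos rfl, tsub_zero]
      congr 1
      · rw [hset i, if_pos rfl, if_neg (Ne.symm hij), tsub_zero]
      · refine Finset.prod_congr rfl fun k hk => ?_
        have hki : k ≠ i := Finset.ne_of_mem_erase hk
        have hkj : k ≠ j := Finset.ne_of_mem_erase (Finset.mem_of_mem_erase hk)
        rw [hset k, if_neg (Ne.symm hki), if_neg (Ne.symm hkj), tsub_zero, tsub_zero]
    rw [pderiv_monomial, pderiv_monomial, pderiv_monomial, II_monomial x0 hh hpos,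
      hsub1, hsub2, pr]
  -- abbreviations
  set P : Fin n → ℝ := fun i => x0 i + hh i with hP
  set Q : Fin n → ℝ := fun i => x0 i - hh i with hQ
  rw [e1, Finset.sum_congr rfl (fun i hi => by rw [e3 i hi]), VV_monomial,
    ← mom_deriv x0 hh j (d j)]
  rcases Nat.eq_zero_or_pos (d j) with hdj | hdj
  · simp [hdj]
  -- now d j ≥ 1
  set δ : Fin n → ℝ :=
    fun i => hh i ^ 2 / 3 * ((d i : ℝ) * ((d i : ℝ) - 1)) * mom x0 hh i (d i - 2) with hδ
  have hsum : ∑ i ∈ E, hh i ^ 2 / 3 *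
      (c * (d i : ℝ) * ((d i - 1 : ℕ) : ℝ) * (d j : ℝ) *
        (mom x0 hh j (d j - 1) *
          (mom x0 hh i (d i - 2) * ∏ k ∈ E.erase i, mom x0 hh k (d k))))
      = c * (d j : ℝ) * mom x0 hh j (d j - 1) *
          ∑ i ∈ E, δ i * ∏ k ∈ E.erase i, mom x0 hh k (d k) := by
    rw [Finset.mul_sum]
    refine Finset.sum_congr rfl fun i hi => ?_
    have hcmp := cast_mul_pred (d i)
    simp only [hδ]
    linear_combination (hh i ^ 2 / 3 * c * (d j : ℝ) * mom x0 hh j (d j - 1) *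
      mom x0 hh i (d i - 2) * (∏ k ∈ E.erase i, mom x0 hh k (d k))) * hcmp
  rw [hsum]
  -- at most one nonzero δ on E
  have hd2 : ∀ i, δ i ≠ 0 → 2 ≤ d i := by
    intro i hne
    by_contra hlt
    push_neg at hlt
    interval_cases h : d i <;> simp [hδ, h] at hne
  have huniq : ∀ i ∈ E, ∀ i' ∈ E, δ i ≠ 0 → δ i' ≠ 0 → i = i' := by
    intro i hi i' hi' h1 h2
    rcases hd with hsum3 | hml
    · by_contra hne
      have hij : i ≠ j := Finset.ne_of_mem_erase hi
      have hij' : i' ≠ j := Finset.ne_of_mem_erase hi'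
      have hsub : ({j, i, i'} : Finset (Fin n)) ⊆ Finset.univ := Finset.subset_univ _
      have : d j + (d i + d i') ≤ ∑ k, d k := by
        have := Finset.sum_le_sum_of_subset (f := fun k => d k) hsub
        rwa [Finset.sum_insert (by simp [hij.symm, hij'.symm]),
          Finset.sum_insert (by simp [hne]), Finset.sum_singleton] at this
      have := hd2 i h1
      have := hd2 i' h2
      omega
    · have := hd2 i h1
      have := hml i
      omega
  have hT : ∀ i ∈ E, mom x0 hh i (d i) + δ i = hh i * (P i ^ d i + Q i ^ d i) := by
    intro i hi
    have hle : d i ≤ 3 := by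
      rcases hd with hsum3 | hml
      · exact le_trans (Finset.single_le_sum (f := fun k => d k)
          (fun k _ => Nat.zero_le _) (Finset.mem_univ i)) hsum3
      · exact le_trans (hml i) (by norm_num)
    rw [hδ]
    have := mom_T x0 hh (hpos i) hle
    simp only [hP, hQ]
    linarith [this]
  have key : ∏ i ∈ E, mom x0 hh i (d i) + ∑ i ∈ E, δ i * ∏ k ∈ E.erase i, mom x0 hh k (d k)
      = ∏ i ∈ E, (hh i * (P i ^ d i + Q i ^ d i)) := by
    rw [prod_add_unique huniq]
    exact Finset.prod_congr rfl fun i hi => hT i hi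
  have expand : ∏ i ∈ E, (hh i * (P i ^ d i + Q i ^ d i))
      = (∏ i ∈ E, hh i) * ∏ i ∈ E, (P i ^ d i + Q i ^ d i) := Finset.prod_mul_distrib
  linear_combination (c * (d j : ℝ) * mom x0 hh j (d j - 1)) * key
    + (c * (d j : ℝ) * mom x0 hh j (d j - 1)) * expand

lemma II_zero : II x0 hh (0 : MvPolynomial (Fin n) ℝ) = 0 := by
  simp [II]

lemma Phi_poly (hpos : ∀ i, 0 < hh i) (j : Fin n) (p : MvPolynomial (Fin n) ℝ)
    (hp : ∀ d ∈ p.support, (∑ i, d i) ≤ 3 ∨ ∀ i, d i ≤ 1) :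
    II x0 hh (pderiv j p)
      + ∑ i ∈ Finset.univ.erase j, hh i ^ 2 / 3 *
          II x0 hh (pderiv j (pderiv i (pderiv i p)))
      = (∏ i ∈ Finset.univ.erase j, hh i) * VV x0 hh j p := by
  classical
  conv_lhs => rw [p.as_sum]
  conv_rhs => rw [p.as_sum]
  simp only [map_sum]
  rw [II_finset_sum, VV_finset_sum, Finset.mul_sum]
  have hmid : ∀ i ∈ Finset.univ.erase j, hh i ^ 2 / 3 *
      II x0 hh (∑ d ∈ p.support, pderiv j (pderiv i (pderiv i (monomial d (coeff d p)))))
      = ∑ d ∈ p.support, hh i ^ 2 / 3 *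
          II x0 hh (pderiv j (pderiv i (pderiv i (monomial d (coeff d p))))) := by
    intro i _
    rw [II_finset_sum, Finset.mul_sum]
  rw [Finset.sum_congr rfl hmid, Finset.sum_comm, ← Finset.sum_add_distrib]
  exact Finset.sum_congr rfl fun d hd => Phi_monomial x0 hh hpos j d (coeff d p) (hp d hd)

lemma pderiv_eq_C_of_linear {v : MvPolynomial (Fin n) ℝ} (hv : v.totalDegree ≤ 1) (j : Fin n) :
    ∃ b : ℝ, pderiv j v = C b := by
  classical
  have hterm : ∀ d ∈ v.support, ∃ b : ℝ, pderiv j (monomial d (coeff d v)) = C b := by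
    intro d hd
    rcases Nat.eq_zero_or_pos (d j) with h0 | h1
    · exact ⟨0, by rw [pderiv_monomial, h0]; simp⟩
    · have hsum : (d.sum fun _ e => e) ≤ 1 := le_trans (le_totalDegree hd) hv
      have hsum' : ∑ i, d i ≤ 1 := by
        rwa [Finsupp.sum_fintype _ _ fun _ => rfl] at hsum
      have hdj : d j = 1 := by
        have h2 : d j ≤ ∑ i, d i :=
          Finset.single_le_sum (fun k _ => Nat.zero_le _) (Finset.mem_univ j)
        omega
      have hzero : d - Finsupp.single j 1 = 0 := by
        ext k
        rcases eq_or_ne k j with rfl | hk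
        · simp [Finsupp.tsub_apply, hdj]
        · have hp : d j + d k ≤ ∑ i, d i := by
            have hs := Finset.sum_le_sum_of_subset (f := fun i => d i)
              (Finset.subset_univ ({j, k} : Finset (Fin n)))
            rwa [Finset.sum_insert (by simp [Ne.symm hk]), Finset.sum_singleton] at hs
          have hk0 : d k = 0 := by omega
          simp [Finsupp.tsub_apply, Finsupp.single_apply, hk0]
      refine ⟨coeff d v * (d j : ℝ), ?_⟩
      rw [pderiv_monomial, hzero, monomial_zero']
  have hsumC := Finset.sum_induction (fun d => pderiv j (monomial d (coeff d v)))
    (fun w => ∃ b : ℝ, w = C b)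
    (fun a a' ⟨x, hx⟩ ⟨y, hy⟩ => ⟨x + y, by rw [hx, hy, C_add]⟩)
    ⟨0, by rw [map_zero]⟩ hterm
  obtain ⟨b, hb⟩ := hsumC
  refine ⟨b, ?_⟩
  conv_lhs => rw [v.as_sum]
  rw [map_sum]
  exact hb

lemma double_pderiv_q1 {q1 : MvPolynomial (Fin n) ℝ} (hq1 : ∀ i, q1.degreeOf i ≤ 1)
    (i : Fin n) : pderiv i (pderiv i q1) = 0 := by
  classical
  conv_lhs => rw [q1.as_sum]
  simp only [map_sum, pderiv_monomial]
  refine Finset.sum_eq_zero fun d hd => ?_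
  have hle : d i ≤ 1 := (degreeOf_le_iff.mp (hq1 i)) d hd
  have h2 : ((d - Finsupp.single i 1 : Fin n →₀ ℕ) i) = 0 := by
    rw [Finsupp.tsub_apply, Finsupp.single_eq_same]; omega
  rw [h2]
  simp

lemma triple_pderiv_eq_zero {p : MvPolynomial (Fin n) ℝ} (hp : p.totalDegree ≤ 2)
    {i j : Fin n} (hij : i ≠ j) : pderiv j (pderiv i (pderiv i p)) = 0 := by
  classical
  conv_lhs => rw [p.as_sum]
  simp only [map_sum, pderiv_monomial]
  refine Finset.sum_eq_zero fun d hd => ?_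
  have hsum : ∑ l, d l ≤ 2 := by
    have := le_trans (le_totalDegree hd) hp
    rwa [Finsupp.sum_fintype _ _ fun _ => rfl] at this
  rcases Nat.lt_or_ge (d i) 2 with h | h
  · have h2 : ((d - Finsupp.single i 1 : Fin n →₀ ℕ) i) = 0 := by
      rw [Finsupp.tsub_apply, Finsupp.single_eq_same]; omega
    rw [h2]
    simp
  · have hpair : d i + d j ≤ ∑ l, d l := by
      have hs := Finset.sum_le_sum_of_subset (f := fun l => d l)
        (Finset.subset_univ ({i, j} : Finset (Fin n)))
      rwa [Finset.sum_insert (by simp [hij]), Finset.sum_singleton] at hs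
    have hdj : d j = 0 := by omega
    have h3 : ((d - Finsupp.single i 1 - Finsupp.single i 1 : Fin n →₀ ℕ) j) = 0 := by
      simp [Finsupp.tsub_apply, Finsupp.single_eq_of_ne hij, hdj]
    rw [h3]
    simp

lemma bubble_totalDegree (a e bb : ℝ) (k : Fin n) :
    (C a * ((C e * (X k - C bb)) ^ 2 - 1) : MvPolynomial (Fin n) ℝ).totalDegree ≤ 2 := by
  refine le_trans (totalDegree_mul _ _) ?_
  rw [totalDegree_C, zero_add]
  refine le_trans (totalDegree_sub _ _) ?_
  rw [totalDegree_one, Nat.max_eq_left (Nat.zero_le _)]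
  refine le_trans (totalDegree_pow _ _) ?_
  have h1 : (C e * (X k - C bb) : MvPolynomial (Fin n) ℝ).totalDegree ≤ 1 := by
    refine le_trans (totalDegree_mul _ _) ?_
    rw [totalDegree_C, zero_add]
    refine le_trans (totalDegree_sub _ _) ?_
    simp [totalDegree_X, totalDegree_C]
  omega

lemma sum_erase_swap {M : Type*} [AddCommMonoid M] (f : Fin n → Fin n → M) :
    ∑ i, ∑ j ∈ Finset.univ.erase i, f i j = ∑ j, ∑ i ∈ Finset.univ.erase j, f i j := by
  classical
  have h1 : ∀ i : Fin n, ∑ j ∈ Finset.univ.erase i, f i j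
      = ∑ j, if j = i then 0 else f i j :=
    fun i => (Finset.sum_congr rfl fun j hj =>
        (if_neg (Finset.ne_of_mem_erase hj)).symm).trans
      (Finset.sum_erase (f := fun j => if j = i then 0 else f i j) Finset.univ (if_pos rfl))
  rw [Finset.sum_congr rfl fun i _ => h1 i, Finset.sum_comm]
  refine Finset.sum_congr rfl fun j _ => ?_
  refine ((Finset.sum_erase (f := fun i => if j = i then 0 else f i j) Finset.univ
      (if_pos rfl)).symm.trans
    (Finset.sum_congr rfl fun i hi => if_neg ?_))
  exact (Finset.ne_of_mem_erase hi).symm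

end Wilson51

open Wilson51 in
/-- Lemma 5.1 of the paper: for a cubic polynomial `u`, a linear polynomial `v` and a
Wilson interpolant `q` of `u` on the axis-parallel box `K`,
`∫_K ∇(u - q)·∇v dx = - Σᵢ Σ_{j≠i} (hᵢ²/3) ∫_K ∂ᵢ²∂ⱼu · ∂ⱼv dx`. -/
theorem wilson_interpolation_gradient_identity
    (n : ℕ) (x0 hh : Fin n → ℝ) (hh_pos : ∀ i, 0 < hh i)
    (u : MvPolynomial (Fin n) ℝ) (hu : u.totalDegree ≤ 3)
    (v : MvPolynomial (Fin n) ℝ) (hv : v.totalDegree ≤ 1)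
    (q q1 : MvPolynomial (Fin n) ℝ) (c : Fin n → ℝ)
    (hq1 : ∀ i, q1.degreeOf i ≤ 1)
    (hq : q = q1 + ∑ i, MvPolynomial.C (c i) *
      ((MvPolynomial.C (hh i)⁻¹ * (MvPolynomial.X i - MvPolynomial.C (x0 i))) ^ 2 - 1))
    (hvertex : ∀ ε : Fin n → Bool,
      MvPolynomial.eval (fun i => if ε i then x0 i + hh i else x0 i - hh i) q
        = MvPolynomial.eval (fun i => if ε i then x0 i + hh i else x0 i - hh i) u)
    (hmean : ∀ i : Fin n,
      (∫ x in Set.univ.pi fun j => Set.Icc (x0 j - hh j) (x0 j + hh j),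
        MvPolynomial.eval x (MvPolynomial.pderiv i (MvPolynomial.pderiv i q)))
      = ∫ x in Set.univ.pi fun j => Set.Icc (x0 j - hh j) (x0 j + hh j),
        MvPolynomial.eval x (MvPolynomial.pderiv i (MvPolynomial.pderiv i u))) :
    (∫ x in Set.univ.pi fun j => Set.Icc (x0 j - hh j) (x0 j + hh j),
      ∑ j, MvPolynomial.eval x (MvPolynomial.pderiv j (u - q))
        * MvPolynomial.eval x (MvPolynomial.pderiv j v))
    = - ∑ i, ∑ j ∈ Finset.univ.erase i, hh i ^ 2 / 3
        * ∫ x in Set.univ.pi fun j' => Set.Icc (x0 j' - hh j') (x0 j' + hh j'),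
            MvPolynomial.eval x
              (MvPolynomial.pderiv j (MvPolynomial.pderiv i (MvPolynomial.pderiv i u)))
            * MvPolynomial.eval x (MvPolynomial.pderiv j v) := by
  classical
  have hbox : (Set.univ.pi fun j => Set.Icc (x0 j - hh j) (x0 j + hh j)) = box x0 hh := rfl
  rw [hbox]
  choose b hb using fun j : Fin n => pderiv_eq_C_of_linear hv j
  -- support conditions
  have cond_u : ∀ d ∈ u.support, (∑ i, d i) ≤ 3 ∨ ∀ i, d i ≤ 1 := by
    intro d hd
    left
    have h1 := le_trans (le_totalDegree hd) hu
    rwa [Finsupp.sum_fintype _ _ fun _ => rfl] at h1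
  have cond_q : ∀ d ∈ q.support, (∑ i, d i) ≤ 3 ∨ ∀ i, d i ≤ 1 := by
    intro d hd
    rw [MvPolynomial.mem_support_iff, hq, coeff_add] at hd
    by_cases h1 : coeff d q1 = 0
    · left
      have h2 : coeff d (∑ i : Fin n, (C (c i) *
          ((C (hh i)⁻¹ * (X i - C (x0 i))) ^ 2 - 1) : MvPolynomial (Fin n) ℝ)) ≠ 0 := by
        intro h; rw [h1, h] at hd; simp at hd
      rw [MvPolynomial.coeff_sum] at h2
      obtain ⟨i0, -, h3⟩ := Finset.exists_ne_zero_of_sum_ne_zero h2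
      have h4 : d ∈ (C (c i0) * ((C (hh i0)⁻¹ * (X i0 - C (x0 i0))) ^ 2 - 1)).support :=
        MvPolynomial.mem_support_iff.mpr h3
      have h5 := le_trans (le_totalDegree h4)
        (bubble_totalDegree (c i0) (hh i0)⁻¹ (x0 i0) i0)
      rw [Finsupp.sum_fintype _ _ fun _ => rfl] at h5
      omega
    · right
      intro i
      exact (degreeOf_le_iff.mp (hq1 i)) d (MvPolynomial.mem_support_iff.mpr h1)
  -- triple derivatives of q vanish
  have h3q : ∀ j : Fin n, ∀ i ∈ Finset.univ.erase j,
      pderiv j (pderiv i (pderiv i q)) = 0 := by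
    intro j i hi
    have hij : i ≠ j := Finset.ne_of_mem_erase hi
    rw [hq]
    simp only [map_add, map_sum]
    rw [double_pderiv_q1 hq1 i, map_zero, zero_add]
    exact Finset.sum_eq_zero fun k _ =>
      triple_pderiv_eq_zero (bubble_totalDegree (c k) (hh k)⁻¹ (x0 k) k) hij
  -- vertex sums agree
  have hVV : ∀ j : Fin n, VV x0 hh j q = VV x0 hh j u := by
    intro j
    unfold VV vtx
    exact Finset.sum_congr rfl fun ε _ => by rw [hvertex ε]
  -- the key identity for each j
  have key : ∀ j : Fin n, II x0 hh (pderiv j u) - II x0 hh (pderiv j q)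
      = - ∑ i ∈ Finset.univ.erase j, hh i ^ 2 / 3 *
          II x0 hh (pderiv j (pderiv i (pderiv i u))) := by
    intro j
    have h1 := Phi_poly x0 hh hh_pos j u cond_u
    have h2 := Phi_poly x0 hh hh_pos j q cond_q
    rw [hVV j] at h2
    have h0 : ∑ i ∈ Finset.univ.erase j, hh i ^ 2 / 3 *
        II x0 hh (pderiv j (pderiv i (pderiv i q))) = 0 :=
      Finset.sum_eq_zero fun i hi => by rw [h3q j i hi, II_zero, mul_zero]
    linarith [h1, h2, h0]
  -- rewrite the left-hand side
  have hint : ∀ j : Fin n, IntegrableOn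
      (fun x => eval x (pderiv j (u - q)) * eval x (pderiv j v)) (box x0 hh) := by
    intro j
    have h1 : (fun x : Fin n → ℝ => eval x (pderiv j (u - q)) * eval x (pderiv j v))
        = fun x => eval x (pderiv j (u - q) * pderiv j v) := by
      funext x; rw [map_mul]
    rw [h1]
    exact integrableOn_eval x0 hh _
  have hL : (∫ x in box x0 hh,
      ∑ j, eval x (pderiv j (u - q)) * eval x (pderiv j v))
      = ∑ j, (II x0 hh (pderiv j u) - II x0 hh (pderiv j q)) * b j := by
    rw [integral_finset_sum _ fun j _ => hint j]
    refine Finset.sum_congr rfl fun j _ => ?_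
    simp_rw [hb j, eval_C]
    rw [MeasureTheory.integral_mul_const]
    congr 1
    have h1 : pderiv j (u - q) = pderiv j u - pderiv j q := map_sub _ _ _
    rw [h1]
    have h2 : ∀ x : Fin n → ℝ, eval x (pderiv j u - pderiv j q)
        = eval x (pderiv j u) - eval x (pderiv j q) := fun x => map_sub _ _ _
    simp_rw [h2]
    exact integral_sub (integrableOn_eval x0 hh _) (integrableOn_eval x0 hh _)
  rw [hL]
  -- rewrite the right-hand side
  have hR : ∀ i j : Fin n,
      (∫ x in box x0 hh,
        eval x (pderiv j (pderiv i (pderiv i u))) * eval x (pderiv j v))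
        = II x0 hh (pderiv j (pderiv i (pderiv i u))) * b j := by
    intro i j
    simp_rw [hb j, eval_C]
    rw [MeasureTheory.integral_mul_const]
    rfl
  have hRrw : ∀ i : Fin n, ∀ j ∈ Finset.univ.erase i, hh i ^ 2 / 3 *
      (∫ x in box x0 hh,
        eval x (pderiv j (pderiv i (pderiv i u))) * eval x (pderiv j v))
      = hh i ^ 2 / 3 * (II x0 hh (pderiv j (pderiv i (pderiv i u))) * b j) := by
    intro i j _
    rw [hR i j]
  rw [Finset.sum_congr rfl fun i _ => Finset.sum_congr rfl fun j hj => hRrw i j hj]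
  rw [sum_erase_swap fun i j => hh i ^ 2 / 3 *
    (II x0 hh (pderiv j (pderiv i (pderiv i u))) * b j)]
  rw [Finset.sum_congr rfl fun j (_ : j ∈ Finset.univ) => by rw [key j]]
  rw [← Finset.sum_neg_distrib]
  refine Finset.sum_congr rfl fun j _ => ?_
  rw [neg_mul, Finset.sum_mul]
  exact congrArg Neg.neg (Finset.sum_congr rfl fun i _ => mul_assoc _ _ _)
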